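/- Let W ∈ ℝ^{N×n}, b, z ∈ ℝ^N, x ∈ ℝⁿ, and M ∈ ℝ with |(W x + b)_j| ≤ M for every j. Then z = σ(W x + b) (with σ(u) = max(u,0) componentwise) if and only if there exists t ∈ ℝ^N with t_j ∈ {0,1} for all j such that, componentwise, z ≥ W x + b, z ≤ W x + b + M·t, z ≥ 0, and z ≤ M·(1 − t). -/

import Mathlib

/-- Big-M mixed-integer encoding of one ReLU layer: if `|(W x + b) j| ≤ M` for all
`j`, then `z = σ(W x + b)` (componentwise `σ(u) = max(u, 0)`) iff there is a
binary vector `t ∈ {0, 1}^N` such that componentwise `z ≥ W x + b`,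
`z ≤ W x + b + M t`, `z ≥ 0` and `z ≤ M (1 - t)`. -/
theorem relu_layer_bigM_encoding {N n : ℕ}
    (W : Matrix (Fin N) (Fin n) ℝ) (b z : Fin N → ℝ) (x : Fin n → ℝ)
    (M : ℝ) (hM : ∀ j, |(W.mulVec x + b) j| ≤ M) :
    z = (fun j => max ((W.mulVec x + b) j) 0) ↔
      ∃ t : Fin N → ℝ, (∀ j, t j = 0 ∨ t j = 1) ∧
        ∀ j, z j ≥ (W.mulVec x + b) j ∧
             z j ≤ (W.mulVec x + b) j + M * t j ∧
             z j ≥ 0 ∧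
             z j ≤ M * (1 - t j) := by
  simp only [Pi.add_apply] at hM ⊢
  constructor
  · rintro rfl
    refine ⟨fun j => if 0 ≤ W.mulVec x j + b j then 0 else 1, fun j => by
      by_cases h : 0 ≤ W.mulVec x j + b j <;> simp [h], fun j => ?_⟩
    have h1 := (abs_le.mp (hM j)).1
    have h2 := (abs_le.mp (hM j)).2
    by_cases h : 0 ≤ W.mulVec x j + b j <;> simp only [h, if_true, if_false] <;>
      [skip; push_neg at h] <;>
      [rw [max_eq_left h]; rw [max_eq_right h.le]] <;>
      refine ⟨by linarith, by linarith, by linarith, by linarith⟩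
  · rintro ⟨t, ht, h⟩
    funext j
    obtain ⟨h1, h2, h3, h4⟩ := h j
    try simp only [Pi.add_apply] at h1 h2
    rcases ht j with h0 | h0 <;> rw [h0] at h2 h4 <;>
      [skip; skip] <;> simp only [mul_zero, mul_one, add_zero, sub_zero, sub_self] at h2 h4
    · rw [max_eq_left (le_trans h3 h2)]; linarith
    · have hle : W.mulVec x j + b j ≤ 0 := by linarith
      rw [max_eq_right hle]; linarith
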